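/- Let K be an n×n real symmetric positive definite matrix and α > 0, and for C ⊆ {1,…,n} let Pr(C) = det((K/α)_{CC}) / det(I + K/α). Let P = K(K + αI)^{-1}. Then for every fixed subset A ⊆ {1,…,n}, the inclusion probability satisfies ∑_{C : A ⊆ C ⊆ {1,…,n}} Pr(C) = det(P_{AA}). -/

import Mathlib

open Matrix BigOperators Finset

/-- The principal submatrix `M_{AA}` of `M` with rows and columns indexed by `A`. -/
def principalSub {n : ℕ} (M : Matrix (Fin n) (Fin n) ℝ) (A : Finset (Fin n)) :
    Matrix {x // x ∈ A} {x // x ∈ A} ℝ :=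
  fun i j => M i j

/-- If all rows of `M` outside `S` are standard basis rows, then `det M` equals the
determinant of the principal submatrix on `S`. -/
lemma det_eq_principal_of_rows {n : ℕ} (M : Matrix (Fin n) (Fin n) ℝ) (S : Finset (Fin n))
    (h : ∀ i, i ∉ S → ∀ j, M i j = if i = j then 1 else 0) :
    M.det = (principalSub M S).det := by
  classical
  let e : {x // x ∈ S} ⊕ {x // x ∉ S} ≃ Fin n := Equiv.sumCompl (fun x => x ∈ S)
  have hdet := Matrix.det_submatrix_equiv_self e M
  have hblock : M.submatrix e e =
      Matrix.fromBlocks (principalSub M S)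
        (Matrix.of fun i j => M i.1 j.1) 0 1 := by
    ext i j
    cases i with
    | inl i =>
      cases j with
      | inl j => rfl
      | inr j => rfl
    | inr i =>
      cases j with
      | inl j =>
        have := h i.1 i.2 j.1
        have hne : i.1 ≠ j.1 := fun hc => i.2 (hc ▸ j.2)
        simp [e, Matrix.submatrix, Equiv.sumCompl, this, hne]
      | inr j =>
        have hMij := h i.1 i.2 j.1
        simp only [e, Matrix.submatrix_apply, Equiv.sumCompl_apply_inr,
          Matrix.fromBlocks_apply₂₂, hMij, Matrix.one_apply]
        by_cases hij : i = j
        · simp [hij]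
        · have hne : i.1 ≠ j.1 := fun hc => hij (Subtype.ext hc)
          simp [hij, hne]
  rw [← hdet, hblock, Matrix.det_fromBlocks_zero₂₁]
  simp

/-- Column version. -/
lemma det_eq_principal_of_cols {n : ℕ} (M : Matrix (Fin n) (Fin n) ℝ) (S : Finset (Fin n))
    (h : ∀ j, j ∉ S → ∀ i, M i j = if i = j then 1 else 0) :
    M.det = (principalSub M S).det := by
  rw [← Matrix.det_transpose M]
  rw [det_eq_principal_of_rows Mᵀ S (by
    intro i hi j
    rw [Matrix.transpose_apply, h i hi j]
    by_cases hij : i = j <;> simp [hij, eq_comm])]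
  have : principalSub Mᵀ S = (principalSub M S)ᵀ := rfl
  rw [this, Matrix.det_transpose]

/-- Multilinear expansion of `det (M + diagonal d)` over principal minors. -/
lemma det_add_diagonal {n : ℕ} (M : Matrix (Fin n) (Fin n) ℝ) (d : Fin n → ℝ) :
    (M + Matrix.diagonal d).det
      = ∑ S : Finset (Fin n), (∏ i ∈ Sᶜ, d i) * (principalSub M S).det := by
  classical
  set f := (Matrix.detRowAlternating (R := ℝ) (n := Fin n)).toMultilinearMap with hf
  have h0 : (M + Matrix.diagonal d).det
      = f ((fun i => M i) + (fun i => Matrix.diagonal d i)) := rfl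
  rw [h0, f.map_add_univ]
  apply Finset.sum_congr rfl
  intro S _
  set c : Fin n → ℝ := fun i => if i ∈ S then 1 else d i with hc
  set v : Fin n → (Fin n → ℝ) := fun i => if i ∈ S then M i else Pi.single i 1 with hv
  have hpw : S.piecewise (fun i => M i) (fun i => Matrix.diagonal d i)
      = fun i => c i • v i := by
    funext i j
    by_cases hi : i ∈ S
    · simp [Finset.piecewise, hi, hc, hv]
    · simp [Finset.piecewise, hi, hc, hv, Matrix.diagonal_apply, Pi.single_apply]
      by_cases hij : i = j <;> simp [hij, eq_comm]
  rw [hpw, f.map_smul_univ c v]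
  have hprod : ∏ i, c i = ∏ i ∈ Sᶜ, d i := by
    rw [← Finset.prod_compl_mul_prod S (f := c)]
    have h1 : ∏ i ∈ S, c i = 1 := Finset.prod_eq_one (fun i hi => by simp [hc, hi])
    have h2 : ∏ i ∈ Sᶜ, c i = ∏ i ∈ Sᶜ, d i :=
      Finset.prod_congr rfl (fun i hi => by
        simp only [Finset.mem_compl] at hi; simp [hc, hi])
    rw [h1, h2, mul_one]
  have hdetv : f v = (principalSub M S).det := by
    have : f v = (Matrix.of v).det := rfl
    rw [this, det_eq_principal_of_rows (Matrix.of v) S (by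
      intro i hi j
      simp [hv, hi, Pi.single_apply, eq_comm])]
    congr 1
    ext i j
    simp [principalSub, hv, i.2]
  rw [hprod, hdetv, smul_eq_mul]

/-- Inclusion probabilities of the DPP with L-ensemble `K/α`: if each subset `C` receives
probability `det((K/α)_{CC}) / det(I + K/α)`, then for every fixed subset `A`,
`Pr(A ⊆ Y) = det(P_{AA})` where `P = K (K + αI)⁻¹` is the marginal kernel. -/
theorem dpp_inclusion_prob_eq_det_marginal (n : ℕ) (K : Matrix (Fin n) (Fin n) ℝ)
    (hsymm : K.IsSymm) (hPD : K.PosDef) (α : ℝ) (hα : 0 < α)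
    (A : Finset (Fin n)) :
    ∑ C ∈ Finset.univ.filter (fun C : Finset (Fin n) => A ⊆ C),
        (principalSub (α⁻¹ • K) C).det / (1 + α⁻¹ • K).det =
      (principalSub (K * (K + α • (1 : Matrix (Fin n) (Fin n) ℝ))⁻¹) A).det := by
  classical
  set L : Matrix (Fin n) (Fin n) ℝ := α⁻¹ • K with hL
  set M : Matrix (Fin n) (Fin n) ℝ := K + α • 1 with hM
  set d : Fin n → ℝ := fun i => if i ∈ A then 0 else 1 with hd
  -- M is positive definite, hence invertible
  have hα1PD : (α • (1 : Matrix (Fin n) (Fin n) ℝ)).PosDef := by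
    rw [Matrix.smul_one_eq_diagonal]
    exact Matrix.posDef_diagonal_iff.2 (fun i => hα)
  have hMPD : M.PosDef := hPD.add hα1PD
  have hMdet : IsUnit M.det := hMPD.det_pos.ne'.isUnit
  have hMinv : M * M⁻¹ = 1 := Matrix.mul_nonsing_inv M hMdet
  -- relation between M and 1 + L
  have hMeq : M = α • (1 + L) := by
    rw [hL, hM, smul_add, smul_smul, mul_inv_cancel₀ hα.ne', one_smul, add_comm]
  have hMdet' : M.det = α ^ n * (1 + L).det := by
    rw [hMeq, Matrix.det_smul, Fintype.card_fin]
  have h1Ldet : (1 + L).det ≠ 0 := by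
    intro h
    exact hMPD.det_pos.ne' (by rw [hMdet', h, mul_zero])
  -- the diagonal indicator matrix of A
  set D : Matrix (Fin n) (Fin n) ℝ :=
    Matrix.diagonal (fun j => if j ∈ A then (1 : ℝ) else 0) with hD
  set Z : Matrix (Fin n) (Fin n) ℝ := 1 - α • (M⁻¹ * D) with hZ
  -- RHS equals det Z
  have hP : K * M⁻¹ = 1 - α • M⁻¹ := by
    have : K = M - α • 1 := by rw [hM]; abel
    rw [this, Matrix.sub_mul, hMinv, Matrix.smul_mul, Matrix.one_mul]
  have hZcols : ∀ j, j ∉ A → ∀ i, Z i j = if i = j then 1 else 0 := by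
    intro j hj i
    have hMD : (M⁻¹ * D) i j = 0 := by
      rw [Matrix.mul_apply]
      apply Finset.sum_eq_zero
      intro k _
      rw [hD, Matrix.diagonal_apply]
      by_cases hkj : k = j
      · subst hkj; simp [hj]
      · simp [hkj]
    simp [hZ, Matrix.sub_apply, hMD, Matrix.one_apply]
  have hZprin : principalSub Z A =
      principalSub (K * M⁻¹) A := by
    ext i j
    have hj : j.1 ∈ A := j.2
    have hMD : (M⁻¹ * D) i.1 j.1 = M⁻¹ i.1 j.1 := by
      rw [Matrix.mul_apply]
      rw [Finset.sum_eq_single j.1]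
      · simp [hD, Matrix.diagonal_apply, hj]
      · intro k _ hkj
        rw [hD, Matrix.diagonal_apply]; simp [hkj]
      · simp
    simp [principalSub, hZ, hP, Matrix.sub_apply, hMD]
  have hRHS : (principalSub (K * M⁻¹) A).det = Z.det := by
    rw [det_eq_principal_of_cols Z A hZcols, hZprin]
  -- compute M * Z
  have h1D : (1 : Matrix (Fin n) (Fin n) ℝ) - D = Matrix.diagonal d := by
    ext i j
    by_cases hij : i = j
    · subst hij
      by_cases hi : i ∈ A <;>
        simp [hD, hd, Matrix.diagonal_apply, Matrix.one_apply, hi]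
    · simp [hD, hd, Matrix.diagonal_apply, Matrix.one_apply, hij]
  have hMZ : M * Z = α • (L + Matrix.diagonal d) := by
    have h1 : M * Z = M - α • D := by
      rw [hZ, Matrix.mul_sub, Matrix.mul_one, Matrix.mul_smul, ← Matrix.mul_assoc,
        hMinv, Matrix.one_mul]
    have h2 : α • (L + Matrix.diagonal d) = K + α • Matrix.diagonal d := by
      rw [smul_add, hL, smul_smul, mul_inv_cancel₀ hα.ne', one_smul]
    rw [h1, h2, hM, add_sub_assoc, ← smul_sub, h1D]
  have hdetMZ : M.det * Z.det = α ^ n * (L + Matrix.diagonal d).det := by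
    rw [← Matrix.det_mul, hMZ, Matrix.det_smul, Fintype.card_fin]
  have hZdet : Z.det = (L + Matrix.diagonal d).det / (1 + L).det := by
    have h3 : α ^ n * ((1 + L).det * Z.det) = α ^ n * (L + Matrix.diagonal d).det := by
      rw [← mul_assoc, ← hMdet', hdetMZ]
    have h2 : (1 + L).det * Z.det = (L + Matrix.diagonal d).det :=
      mul_left_cancel₀ (pow_ne_zero _ hα.ne') h3
    rw [eq_div_iff h1Ldet, mul_comm]
    exact h2
  -- LHS: expansion of det (L + diagonal d)
  have hexp : (L + Matrix.diagonal d).det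
      = ∑ C ∈ Finset.univ.filter (fun C : Finset (Fin n) => A ⊆ C),
          (principalSub L C).det := by
    rw [det_add_diagonal]
    rw [Finset.sum_filter]
    apply Finset.sum_congr rfl
    intro S _
    by_cases hAS : A ⊆ S
    · have : ∏ i ∈ Sᶜ, d i = 1 := by
        apply Finset.prod_eq_one
        intro i hi
        rw [Finset.mem_compl] at hi
        have : i ∉ A := fun h => hi (hAS h)
        simp [hd, this]
      simp [hAS, this]
    · obtain ⟨a, haA, haS⟩ := Finset.not_subset.1 hAS
      have : ∏ i ∈ Sᶜ, d i = 0 :=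
        Finset.prod_eq_zero (Finset.mem_compl.2 haS) (by simp [hd, haA])
      simp [hAS, this]
  -- put it together
  rw [hRHS, hZdet, hexp, Finset.sum_div]
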